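/- Let n ≥ 2 and let F be a family of (n−1)-element subsets of [n]. Define the complementary singleton family F* = { {r} : r ∈ [n], [n] ∖ {r} ∉ F }. Then Bob(F) holds if and only if Alice(F*) does not hold. -/
import Mathlib


/-- The board `[n] = {1, …, n}` as a finite set of natural numbers. -/
def board (n : ℕ) : Finset ℕ := Finset.Icc 1 n

/-- The order-preserving relabelling of `[n] \ {x}` onto `[n-1]`:
elements below `x` are unchanged, elements above `x` drop by one. -/
def stdElt (x r : ℕ) : ℕ := if r < x then r else r - 1

/-- Standardise a set avoiding `x`: relabel it via `stdElt x`. -/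
def stdSet (x : ℕ) (S : Finset ℕ) : Finset ℕ := S.image (stdElt x)

/-- The standardised section `F_x^+ = { S \ {x} : x ∈ S ∈ F }`,
viewed as a family of subsets of `[n-1]`. -/
def secPlus (F : Set (Finset ℕ)) (x : ℕ) : Set (Finset ℕ) :=
  {T | ∃ S ∈ F, x ∈ S ∧ T = stdSet x (S.erase x)}

/-- The standardised section `F_x^- = { S ∈ F : x ∉ S }`,
viewed as a family of subsets of `[n-1]`. -/
def secMinus (F : Set (Finset ℕ)) (x : ℕ) : Set (Finset ℕ) :=
  {T | ∃ S ∈ F, x ∉ S ∧ T = stdSet x S}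

mutual
  /-- `AliceWins n k F`: Alice wins her `F`-game, where `F` is a family of
  `k`-subsets of `[n]`.  Terminal games (`k = 0` or `k = n`) are won iff `F`
  is nonempty; otherwise Alice needs a first offer `x` such that Bob wins both
  his `F_x^+`-game and his `F_x^-`-game. -/
  def AliceWins (n k : ℕ) (F : Set (Finset ℕ)) : Prop :=
    if h : k = 0 ∨ n ≤ k then F.Nonempty
    else ∃ x ∈ board n,
      BobWins (n - 1) (k - 1) (secPlus F x) ∧ BobWins (n - 1) k (secMinus F x)
  termination_by n
  decreasing_by all_goals omega

  /-- `BobWins n k F`: Bob wins his `F`-game, where `F` is a family of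
  `k`-subsets of `[n]`.  Terminal games (`k = 0` or `k = n`) are won iff `F`
  is nonempty; otherwise Bob needs, for every first offer `x`, that Alice wins
  her `F_x^+`-game or her `F_x^-`-game. -/
  def BobWins (n k : ℕ) (F : Set (Finset ℕ)) : Prop :=
    if h : k = 0 ∨ n ≤ k then F.Nonempty
    else ∀ x ∈ board n,
      AliceWins (n - 1) (k - 1) (secPlus F x) ∨ AliceWins (n - 1) k (secMinus F x)
  termination_by n
  decreasing_by all_goals omega
end

/-- `S ⪯ T` in the pointwise order: the increasing enumerations of `S` and `T`
have the same length and are pointwise `≤`. -/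
def PointwiseLE (S T : Finset ℕ) : Prop :=
  List.Forall₂ (· ≤ ·) (S.sort (· ≤ ·)) (T.sort (· ≤ ·))

/-- `F` consists of `k`-element subsets of `[n]`. -/
def IsFamilyOn (n k : ℕ) (F : Set (Finset ℕ)) : Prop :=
  ∀ S ∈ F, S ⊆ board n ∧ S.card = k

/-- `F` is pointwise-increasing as a family of `k`-subsets of `[n]`:
it is upwards closed in the pointwise order. -/
def IsIncreasingFamily (n k : ℕ) (F : Set (Finset ℕ)) : Prop :=
  ∀ S T : Finset ℕ, S ∈ F → T ⊆ board n → T.card = k → PointwiseLE S T → T ∈ F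

section Aux

lemma mem_board {n r : ℕ} : r ∈ board n ↔ 1 ≤ r ∧ r ≤ n := Finset.mem_Icc

lemma board_card (n : ℕ) : (board n).card = n := by
  simp [board, Nat.card_Icc]

/-- Inverse of `stdElt x` on `[n] \ {x}`. -/
def invStd (x t : ℕ) : ℕ := if t < x then t else t + 1

lemma stdElt_invStd (x t : ℕ) : stdElt x (invStd x t) = t := by
  rcases Nat.lt_or_ge t x with h | h
  · simp [invStd, stdElt, h]
  · have h1 : ¬ t < x := by omega
    have h2 : ¬ t + 1 < x := by omega
    simp [invStd, stdElt, h1, h2]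

lemma invStd_ne (x t : ℕ) : invStd x t ≠ x := by
  unfold invStd; split <;> omega

lemma invStd_mem_board {n x t : ℕ} (hx : x ∈ board n) (ht : t ∈ board (n - 1)) :
    invStd x t ∈ board n := by
  rw [mem_board] at *; unfold invStd; split <;> omega

lemma stdElt_mem_board {n x r : ℕ} (hx : x ∈ board n) (hr : r ∈ board n) (hne : r ≠ x) :
    stdElt x r ∈ board (n - 1) := by
  rw [mem_board] at *; unfold stdElt; split <;> omega

lemma stdElt_inj {x r r' : ℕ} (h : r ≠ x) (h' : r' ≠ x) (heq : stdElt x r = stdElt x r') :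
    r = r' := by
  unfold stdElt at heq; split at heq <;> split at heq <;> omega

lemma stdSet_board {n x : ℕ} (hx : x ∈ board n) :
    stdSet x ((board n).erase x) = board (n - 1) := by
  ext t
  simp only [stdSet, Finset.mem_image, Finset.mem_erase]
  constructor
  · rintro ⟨s, ⟨hs1, hs2⟩, rfl⟩
    exact stdElt_mem_board hx hs2 hs1
  · rintro ht
    exact ⟨invStd x t, ⟨invStd_ne x t, invStd_mem_board hx ht⟩, stdElt_invStd x t⟩

lemma stdSet_erase {x r : ℕ} (S : Finset ℕ) (hxS : x ∉ S) (hr : r ≠ x) :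
    stdSet x (S.erase r) = (stdSet x S).erase (stdElt x r) := by
  ext t
  simp only [stdSet, Finset.mem_image, Finset.mem_erase]
  constructor
  · rintro ⟨s, ⟨hs1, hs2⟩, rfl⟩
    refine ⟨fun h => hs1 (stdElt_inj (fun hc => hxS (by rw [← hc]; exact hs2)) hr h), s, hs2, rfl⟩
  · rintro ⟨hne, s, hs, rfl⟩
    exact ⟨s, ⟨fun h => hne (by rw [h]), hs⟩, rfl⟩

lemma stdSet_card {x : ℕ} (S : Finset ℕ) (hxS : x ∉ S) : (stdSet x S).card = S.card := by
  apply Finset.card_image_of_injOn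
  intro a ha b hb h
  exact stdElt_inj (fun hc => hxS (by rw [← hc]; exact ha)) (fun hc => hxS (by rw [← hc]; exact hb)) h

lemma stdSet_subset {n x : ℕ} {S : Finset ℕ} (hx : x ∈ board n) (hS : S ⊆ board n)
    (hxS : x ∉ S) : stdSet x S ⊆ board (n - 1) := by
  intro t ht
  obtain ⟨s, hs, rfl⟩ := Finset.mem_image.mp ht
  exact stdElt_mem_board hx (hS hs) (fun h => hxS (by rw [← h]; exact hs))

/-- Every `(n-1)`-subset of `[n]` is `[n] \ {r}` for some `r ∈ [n]`. -/
lemma exists_eq_erase {n : ℕ} {S : Finset ℕ} (hS : S ⊆ board n) (hc : S.card = n - 1)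
    (hn : 1 ≤ n) : ∃ r ∈ board n, S = (board n).erase r := by
  have h1 : (board n \ S).card = 1 := by
    rw [Finset.card_sdiff_of_subset hS, board_card, hc]; omega
  obtain ⟨r, hr⟩ := Finset.card_eq_one.mp h1
  have hrmem : r ∈ board n \ S := hr ▸ Finset.mem_singleton_self r
  rw [Finset.mem_sdiff] at hrmem
  refine ⟨r, hrmem.1, ?_⟩
  ext a
  simp only [Finset.mem_erase]
  constructor
  · intro ha
    exact ⟨fun h => hrmem.2 (by rw [← h]; exact ha), hS ha⟩
  · rintro ⟨hne, hab⟩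
    by_contra h
    have : a ∈ board n \ S := Finset.mem_sdiff.mpr ⟨hab, h⟩
    rw [hr, Finset.mem_singleton] at this
    exact hne this

lemma erase_board_inj {n r r' : ℕ} (hr : r ∈ board n) (h : (board n).erase r = (board n).erase r') :
    r = r' := (Finset.erase_inj (board n) hr).mp h

/-- Terminal-game evaluation. -/
lemma aliceWins_term {n k : ℕ} (h : k = 0 ∨ n ≤ k) (F : Set (Finset ℕ)) :
    AliceWins n k F ↔ F.Nonempty := by rw [AliceWins]; simp [h]

lemma bobWins_term {n k : ℕ} (h : k = 0 ∨ n ≤ k) (F : Set (Finset ℕ)) :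
    BobWins n k F ↔ F.Nonempty := by rw [BobWins]; simp [h]

lemma aliceWins_rec {n k : ℕ} (h : ¬ (k = 0 ∨ n ≤ k)) (F : Set (Finset ℕ)) :
    AliceWins n k F ↔ ∃ x ∈ board n,
      BobWins (n - 1) (k - 1) (secPlus F x) ∧ BobWins (n - 1) k (secMinus F x) := by
  rw [AliceWins]; simp [h]

lemma bobWins_rec {n k : ℕ} (h : ¬ (k = 0 ∨ n ≤ k)) (F : Set (Finset ℕ)) :
    BobWins n k F ↔ ∀ x ∈ board n,
      AliceWins (n - 1) (k - 1) (secPlus F x) ∨ AliceWins (n - 1) k (secMinus F x) := by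
  rw [BobWins]; simp [h]

/-- The complementary singleton family. -/
def cstar (n : ℕ) (F : Set (Finset ℕ)) : Set (Finset ℕ) :=
  {S : Finset ℕ | ∃ r ∈ board n, (board n).erase r ∉ F ∧ S = {r}}

end Aux

section Main

lemma stdSet_erase_board {n x r : ℕ} (hx : x ∈ board n) (hrx : r ≠ x) :
    stdSet x (((board n).erase r).erase x) = (board (n - 1)).erase (stdElt x r) := by
  rw [Finset.erase_right_comm, stdSet_erase _ (Finset.notMem_erase x _) hrx, stdSet_board hx]

lemma secMinus_nonempty {n : ℕ} {F : Set (Finset ℕ)} (hF : IsFamilyOn n (n - 1) F)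
    {x : ℕ} (hx : x ∈ board n) (hn : 1 ≤ n) :
    (secMinus F x).Nonempty ↔ (board n).erase x ∈ F := by
  constructor
  · rintro ⟨T, S, hS, hxS, rfl⟩
    obtain ⟨hsub, hcard⟩ := hF S hS
    obtain ⟨r, hr, rfl⟩ := exists_eq_erase hsub hcard hn
    have hrx : r = x := by
      by_contra h
      exact hxS (Finset.mem_erase.mpr ⟨fun hc => h hc.symm, hx⟩)
    rwa [hrx] at hS
  · intro h
    exact ⟨stdSet x ((board n).erase x), (board n).erase x, h, Finset.notMem_erase x _, rfl⟩

lemma secPlus_family {n : ℕ} {F : Set (Finset ℕ)} (hF : IsFamilyOn n (n - 1) F)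
    {x : ℕ} (hx : x ∈ board n) :
    IsFamilyOn (n - 1) (n - 1 - 1) (secPlus F x) := by
  rintro T ⟨S, hS, hxS, rfl⟩
  obtain ⟨hsub, hcard⟩ := hF S hS
  have hxe : x ∉ S.erase x := Finset.notMem_erase x S
  constructor
  · exact stdSet_subset hx (fun a ha => hsub (Finset.mem_of_mem_erase ha)) hxe
  · rw [stdSet_card _ hxe, Finset.card_erase_of_mem hxS, hcard]

lemma secPlus_cstar_nonempty {n : ℕ} {F : Set (Finset ℕ)} {x : ℕ} (hx : x ∈ board n) :
    (secPlus (cstar n F) x).Nonempty ↔ (board n).erase x ∉ F := by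
  constructor
  · rintro ⟨T, S, ⟨r, hr, hrF, rfl⟩, hxS, rfl⟩
    have : x = r := Finset.mem_singleton.mp hxS
    rwa [this]
  · intro h
    exact ⟨_, {x}, ⟨x, hx, h, rfl⟩, Finset.mem_singleton_self x, rfl⟩

lemma secMinus_cstar {n : ℕ} {F : Set (Finset ℕ)} (hF : IsFamilyOn n (n - 1) F)
    {x : ℕ} (hx : x ∈ board n) (hn : 1 ≤ n) :
    secMinus (cstar n F) x = cstar (n - 1) (secPlus F x) := by
  ext T
  simp only [secMinus, cstar, secPlus, Set.mem_setOf_eq]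
  constructor
  · rintro ⟨S, ⟨r, hr, hrF, rfl⟩, hxS, rfl⟩
    have hrx : r ≠ x := fun h => hxS (by rw [h]; exact Finset.mem_singleton_self x)
    refine ⟨stdElt x r, stdElt_mem_board hx hr hrx, ?_, by simp [stdSet]⟩
    rintro ⟨S, hS, hxS', heq⟩
    obtain ⟨hsub, hcard⟩ := hF S hS
    obtain ⟨r', hr', rfl⟩ := exists_eq_erase hsub hcard hn
    have hr'x : r' ≠ x := by
      intro h
      rw [h] at hxS'
      exact (Finset.notMem_erase x (board n)) hxS'
    rw [stdSet_erase_board hx hr'x] at heq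
    have hstd : stdElt x r = stdElt x r' :=
      erase_board_inj (stdElt_mem_board hx hr hrx) heq
    have : r = r' := stdElt_inj hrx hr'x hstd
    rw [← this] at hS
    exact hrF hS
  · rintro ⟨s, hs, hnotins, rfl⟩
    have hne : invStd x s ≠ x := invStd_ne x s
    have hmemb : invStd x s ∈ board n := invStd_mem_board hx hs
    refine ⟨{invStd x s}, ⟨invStd x s, hmemb, ?_, rfl⟩, ?_, ?_⟩
    · intro hmem
      apply hnotins
      refine ⟨(board n).erase (invStd x s), hmem,
        Finset.mem_erase.mpr ⟨fun h => hne h.symm, hx⟩, ?_⟩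
      rw [stdSet_erase_board hx hne, stdElt_invStd]
    · intro h
      exact hne (Finset.mem_singleton.mp h).symm
    · simp [stdSet, stdElt_invStd]

lemma key : ∀ m : ℕ, ∀ F : Set (Finset ℕ), IsFamilyOn (m + 1) m F →
    ((BobWins (m + 1) m F ↔ ¬ AliceWins (m + 1) 1 (cstar (m + 1) F)) ∧
     (AliceWins (m + 1) m F ↔ ¬ BobWins (m + 1) 1 (cstar (m + 1) F))) := by
  intro m
  induction m with
  | zero =>
    intro F hF
    have h1 : (0 : ℕ) = 0 ∨ (1 : ℕ) ≤ 0 := Or.inl rfl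
    have h2 : (1 : ℕ) = 0 ∨ (1 : ℕ) ≤ 1 := Or.inr le_rfl
    rw [bobWins_term h1, aliceWins_term h2, aliceWins_term h1, bobWins_term h2]
    have hb1 : (board 1).erase 1 = ∅ := by
      rw [board, Finset.Icc_self, Finset.erase_singleton]
    have hne : F.Nonempty ↔ ∅ ∈ F := by
      constructor
      · rintro ⟨S, hS⟩
        have h := (hF S hS).2
        rw [Finset.card_eq_zero] at h
        rwa [h] at hS
      · intro h; exact ⟨∅, h⟩
    have hcs : (cstar 1 F).Nonempty ↔ ∅ ∉ F := by
      constructor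
      · rintro ⟨S, r, hr, hrF, rfl⟩
        have hr1 : r = 1 := by rw [mem_board] at hr; omega
        rw [hr1, hb1] at hrF
        exact hrF
      · intro h
        refine ⟨{1}, 1, mem_board.mpr ⟨le_rfl, le_rfl⟩, ?_, rfl⟩
        rwa [hb1]
    rw [hne, hcs]
    constructor <;> tauto
  | succ m ih =>
    intro F hF
    have hF' : IsFamilyOn (m + 1 + 1) (m + 1 + 1 - 1) F := hF
    have hnt1 : ¬ ((m + 1 : ℕ) = 0 ∨ (m + 1 + 1 : ℕ) ≤ m + 1) := by omega
    have hnt2 : ¬ ((1 : ℕ) = 0 ∨ (m + 1 + 1 : ℕ) ≤ 1) := by omega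
    rw [bobWins_rec hnt1, aliceWins_rec hnt1, aliceWins_rec hnt2, bobWins_rec hnt2]
    simp only [Nat.add_sub_cancel, Nat.sub_self]
    constructor
    · constructor
      · intro hb ha
        obtain ⟨x, hx, hplus, hminus⟩ := ha
        have h1 : (board (m + 1 + 1)).erase x ∉ F :=
          (secPlus_cstar_nonempty hx).mp ((bobWins_term (Or.inl rfl) _).mp hplus)
        rw [show secMinus (cstar (m + 1 + 1) F) x = cstar (m + 1) (secPlus F x) from
          secMinus_cstar hF' hx (by omega)] at hminus
        rcases hb x hx with hA | hA
        · exact ((ih (secPlus F x) (secPlus_family hF' hx)).2.mp hA) hminus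
        · exact h1 ((secMinus_nonempty hF' hx (by omega)).mp
            ((aliceWins_term (Or.inr le_rfl) _).mp hA))
      · intro hna x hx
        by_cases hmem : (board (m + 1 + 1)).erase x ∈ F
        · exact Or.inr ((aliceWins_term (Or.inr le_rfl) _).mpr
            ((secMinus_nonempty hF' hx (by omega)).mpr hmem))
        · left
          refine ((ih (secPlus F x) (secPlus_family hF' hx)).2).mpr ?_
          intro hb1
          apply hna
          refine ⟨x, hx, (bobWins_term (Or.inl rfl) _).mpr
            ((secPlus_cstar_nonempty hx).mpr hmem), ?_⟩
          rw [show secMinus (cstar (m + 1 + 1) F) x = cstar (m + 1) (secPlus F x) from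
            secMinus_cstar hF' hx (by omega)]
          exact hb1
    · constructor
      · intro ha hb
        obtain ⟨x, hx, hplus, hminus⟩ := ha
        have hmem : (board (m + 1 + 1)).erase x ∈ F :=
          (secMinus_nonempty hF' hx (by omega)).mp
            ((bobWins_term (Or.inr le_rfl) _).mp hminus)
        rcases hb x hx with hA | hA
        · exact ((secPlus_cstar_nonempty hx).mp
            ((aliceWins_term (Or.inl rfl) _).mp hA)) hmem
        · rw [show secMinus (cstar (m + 1 + 1) F) x = cstar (m + 1) (secPlus F x) from
            secMinus_cstar hF' hx (by omega)] at hA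
          exact ((ih (secPlus F x) (secPlus_family hF' hx)).1.mp hplus) hA
      · intro hnb
        push_neg at hnb
        obtain ⟨x, hx, hA0, hA1⟩ := hnb
        refine ⟨x, hx, ?_, ?_⟩
        · refine ((ih (secPlus F x) (secPlus_family hF' hx)).1).mpr ?_
          rw [show secMinus (cstar (m + 1 + 1) F) x = cstar (m + 1) (secPlus F x) from
            secMinus_cstar hF' hx (by omega)] at hA1
          exact hA1
        · refine (bobWins_term (Or.inr le_rfl) _).mpr
            ((secMinus_nonempty hF' hx (by omega)).mpr ?_)
          by_contra hmem
          exact hA0 ((aliceWins_term (Or.inl rfl) _).mpr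
            ((secPlus_cstar_nonempty hx).mpr hmem))

end Main

/-- for a family `F` of `(n-1)`-subsets of `[n]` and its
complementary singleton family `F* = { {r} : r ∈ [n], [n] \ {r} ∉ F }`,
Bob wins his `F`-game if and only if Alice does not win her `F*`-game. -/
theorem bob_iff_not_alice_complement (n : ℕ) (hn : 2 ≤ n) (F : Set (Finset ℕ))
    (hF : IsFamilyOn n (n - 1) F) :
    BobWins n (n - 1) F ↔
      ¬ AliceWins n 1
        {S : Finset ℕ | ∃ r ∈ board n, (board n).erase r ∉ F ∧ S = {r}} := by
  obtain ⟨m, rfl⟩ : ∃ m, n = m + 1 := ⟨n - 1, by omega⟩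
  exact (key m F hF).1
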